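/- If p = [a_p, b_p] is a non-leaf node of D^k_A and q is a parent of p in D^k_A, then 1 ≤ |Top-k(q) \ Top-k(p)| ≤ 2, and every position in Top-k(q) \ Top-k(p) lies in column a_p − 1 or column b_p + 1. -/

import Mathlib

/-- `InRange a b p` : `p` is a position of a 2-row array lying in columns `a..b`. -/
def InRange (a b : ℕ) (p : ℕ × ℕ) : Prop :=
  (p.1 = 1 ∨ p.1 = 2) ∧ a ≤ p.2 ∧ p.2 ≤ b

/-- The set of positions of the `min(k, 2(b-a+1))` largest values of `A` restricted to
columns `a..b`: those positions in range dominated by fewer than `k` in-range values. -/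
def TopkSet (A : ℕ → ℕ → ℝ) (k a b : ℕ) : Set (ℕ × ℕ) :=
  {p | InRange a b p ∧ {q | InRange a b q ∧ A p.1 p.2 < A q.1 q.2}.ncard < k}

/-- The leftmost column among the answers of the Top-k query on columns `a..b`. -/
noncomputable def leftCol (A : ℕ → ℕ → ℝ) (k a b : ℕ) : ℕ :=
  sInf {c | ∃ r, (r, c) ∈ TopkSet A k a b}

/-- The rightmost column among the answers of the Top-k query on columns `a..b`. -/
noncomputable def rightCol (A : ℕ → ℕ → ℝ) (k a b : ℕ) : ℕ :=
  sSup {c | ∃ r, (r, c) ∈ TopkSet A k a b}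

/-- `IsChild A k q p` : `q` is a non-leaf node (interval) and `p` is its left or right
child in the DAG `D^k_A`. -/
def IsChild (A : ℕ → ℕ → ℝ) (k : ℕ) (q p : ℕ × ℕ) : Prop :=
  k < 2 * (q.2 - q.1 + 1) ∧
    ((p = (q.1, rightCol A k q.1 q.2 - 1) ∧ q.1 < rightCol A k q.1 q.2) ∨
     (p = (leftCol A k q.1 q.2 + 1, q.2) ∧ leftCol A k q.1 q.2 < q.2))

/-- The nodes of the DAG `D^k_A` on a `2 × n` array: the root is `[1, n]`, and the
children of a non-leaf node are as prescribed by `IsChild`. -/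
inductive IsNode (A : ℕ → ℕ → ℝ) (k n : ℕ) : ℕ × ℕ → Prop
  | root : IsNode A k n (1, n)
  | child {q p : ℕ × ℕ} : IsNode A k n q → IsChild A k q p → IsNode A k n p

/-- `p` is a descendant of `q` in the DAG `D^k_A`. -/
def Descendant (A : ℕ → ℕ → ℝ) (k : ℕ) (p q : ℕ × ℕ) : Prop :=
  Relation.TransGen (fun x y => IsChild A k y x) p q

/-- All entries of the `2 × n` array `A` are pairwise distinct. -/
def DistinctEntries (A : ℕ → ℕ → ℝ) (n : ℕ) : Prop :=
  Set.InjOn (fun p : ℕ × ℕ => A p.1 p.2) {p | InRange 1 n p}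


private lemma inRange_finite (a b : ℕ) : {p : ℕ × ℕ | InRange a b p}.Finite := by
  apply Set.Finite.subset (Set.finite_Icc (1, a) (2, b))
  rintro ⟨r, c⟩ ⟨hr, hc1, hc2⟩
  constructor
  · exact ⟨by omega, hc1⟩
  · exact ⟨by omega, hc2⟩

private lemma topk_finite (A : ℕ → ℕ → ℝ) (k a b : ℕ) : (TopkSet A k a b).Finite :=
  (inRange_finite a b).subset (fun x hx => hx.1)

private lemma topk_nonempty (A : ℕ → ℕ → ℝ) {k a b : ℕ} (hk : 1 ≤ k) (hab : a ≤ b) :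
    (TopkSet A k a b).Nonempty := by
  obtain ⟨x, hx, hmax⟩ := Set.exists_max_image {p : ℕ × ℕ | InRange a b p}
    (fun p => A p.1 p.2) (inRange_finite a b) ⟨(1, a), Or.inl rfl, le_refl a, hab⟩
  refine ⟨x, hx, ?_⟩
  have he : {q | InRange a b q ∧ A x.1 x.2 < A q.1 q.2} = ∅ := by
    ext y
    simp only [Set.mem_setOf_eq, Set.mem_empty_iff_false, iff_false, not_and, not_lt]
    exact fun hy => hmax y hy
  rw [he]
  rw [Set.ncard_empty]; omega

private lemma topk_mono (A : ℕ → ℕ → ℝ) {k a b a' b' : ℕ} (h1 : a ≤ a') (h2 : b' ≤ b)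
    {x : ℕ × ℕ} (hx : x ∈ TopkSet A k a b) (hr : InRange a' b' x) :
    x ∈ TopkSet A k a' b' := by
  refine ⟨hr, lt_of_le_of_lt ?_ hx.2⟩
  apply Set.ncard_le_ncard ?_ ((inRange_finite a b).subset (fun y hy => hy.1))
  rintro y ⟨⟨hrow, hc1, hc2⟩, hlt⟩
  exact ⟨⟨hrow, le_trans h1 hc1, le_trans hc2 h2⟩, hlt⟩

private lemma colset_bddAbove (A : ℕ → ℕ → ℝ) (k a b : ℕ) :
    BddAbove {c | ∃ r, (r, c) ∈ TopkSet A k a b} :=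
  ⟨b, fun c ⟨_, hr⟩ => hr.1.2.2⟩

private lemma rc_mem (A : ℕ → ℕ → ℝ) {k a b : ℕ} (hk : 1 ≤ k) (hab : a ≤ b) :
    ∃ r, (r, rightCol A k a b) ∈ TopkSet A k a b := by
  obtain ⟨x, hx⟩ := topk_nonempty A hk hab
  exact Nat.sSup_mem (s := {c | ∃ r, (r, c) ∈ TopkSet A k a b})
    ⟨x.2, x.1, by simpa using hx⟩ (colset_bddAbove A k a b)

private lemma lc_mem (A : ℕ → ℕ → ℝ) {k a b : ℕ} (hk : 1 ≤ k) (hab : a ≤ b) :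
    ∃ r, (r, leftCol A k a b) ∈ TopkSet A k a b := by
  obtain ⟨x, hx⟩ := topk_nonempty A hk hab
  exact Nat.sInf_mem (s := {c | ∃ r, (r, c) ∈ TopkSet A k a b})
    ⟨x.2, x.1, by simpa using hx⟩

private lemma col_le_rc (A : ℕ → ℕ → ℝ) {k a b : ℕ} {x : ℕ × ℕ} (hx : x ∈ TopkSet A k a b) :
    x.2 ≤ rightCol A k a b :=
  le_csSup (colset_bddAbove A k a b)
    (show ∃ r, (r, x.2) ∈ TopkSet A k a b from ⟨x.1, by simpa using hx⟩)

private lemma lc_le_col (A : ℕ → ℕ → ℝ) {k a b : ℕ} {x : ℕ × ℕ} (hx : x ∈ TopkSet A k a b) :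
    leftCol A k a b ≤ x.2 :=
  Nat.sInf_le (show ∃ r, (r, x.2) ∈ TopkSet A k a b from ⟨x.1, by simpa using hx⟩)

private lemma node_bounds (A : ℕ → ℕ → ℝ) {n k : ℕ} (hn : 1 ≤ n) (hk : 1 ≤ k)
    {q : ℕ × ℕ} (hq : IsNode A k n q) : 1 ≤ q.1 ∧ q.1 ≤ q.2 ∧ q.2 ≤ n := by
  induction hq with
  | root => exact ⟨le_refl 1, hn, le_refl n⟩
  | @child q p _ hc ih =>
    obtain ⟨h1, h2, h3⟩ := ih
    rcases hc with ⟨_, ⟨hp, hlt⟩ | ⟨hp, hlt⟩⟩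
    · obtain ⟨r, hr⟩ := rc_mem A hk h2
      have hRb : rightCol A k q.1 q.2 ≤ q.2 := hr.1.2.2
      subst hp
      exact ⟨h1, by omega, by omega⟩
    · obtain ⟨r, hr⟩ := lc_mem A hk h2
      have hLa : q.1 ≤ leftCol A k q.1 q.2 := hr.1.2.1
      subst hp
      exact ⟨by omega, by omega, h3⟩

/-- If `p` is a non-leaf node of `D^k_A` with parent `q`, then
`1 ≤ |Top-k(q) \ Top-k(p)| ≤ 2` and every position of `Top-k(q) \ Top-k(p)` lies in
column `p.1 - 1` or column `p.2 + 1`. -/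
theorem dag_parent_child_diff (A : ℕ → ℕ → ℝ) (n k : ℕ) (hn : 1 ≤ n) (hk : 1 ≤ k)
    (hA : DistinctEntries A n) (p q : ℕ × ℕ) (hq : IsNode A k n q)
    (hchild : IsChild A k q p) (hnonleaf : k < 2 * (p.2 - p.1 + 1)) :
    1 ≤ (TopkSet A k q.1 q.2 \ TopkSet A k p.1 p.2).ncard ∧
    (TopkSet A k q.1 q.2 \ TopkSet A k p.1 p.2).ncard ≤ 2 ∧
    ∀ x ∈ TopkSet A k q.1 q.2 \ TopkSet A k p.1 p.2,
      x.2 = p.1 - 1 ∨ x.2 = p.2 + 1 := by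
  obtain ⟨h1, h2, h3⟩ := node_bounds A hn hk hq
  have hfinq := topk_finite A k q.1 q.2
  have hfin : (TopkSet A k q.1 q.2 \ TopkSet A k p.1 p.2).Finite :=
    hfinq.subset Set.diff_subset
  rcases hchild with ⟨_, ⟨hp, hlt⟩ | ⟨hp, hlt⟩⟩
  · -- left child: p = (q.1, R - 1)
    set R := rightCol A k q.1 q.2 with hR
    obtain ⟨r, hr⟩ := rc_mem A hk h2
    have hRb : R ≤ q.2 := hr.1.2.2
    have hcol : ∀ x ∈ TopkSet A k q.1 q.2 \ TopkSet A k p.1 p.2, x.2 = R := by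
      rintro x ⟨hxq, hxp⟩
      have hle : x.2 ≤ R := col_le_rc A hxq
      have hge : q.1 ≤ x.2 := hxq.1.2.1
      by_contra hne
      apply hxp
      rw [hp]
      exact topk_mono A (le_refl q.1) (by omega) hxq ⟨hxq.1.1, hge, by omega⟩
    refine ⟨?_, ?_, ?_⟩
    · rw [Nat.one_le_iff_ne_zero, ← Nat.pos_iff_ne_zero, Set.ncard_pos hfin]
      refine ⟨(r, R), hr, fun h => ?_⟩
      have := h.1.2.2
      rw [hp] at this
      simp only at this
      omega
    · have hsub : TopkSet A k q.1 q.2 \ TopkSet A k p.1 p.2 ⊆ {(1, R), (2, R)} := by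
        rintro x hx
        have hc := hcol x hx
        have hrow := hx.1.1.1
        rcases hrow with h | h
        · left; rw [← h, ← hc]
        · right; rw [← h, ← hc]; exact rfl
      calc (TopkSet A k q.1 q.2 \ TopkSet A k p.1 p.2).ncard
          ≤ ({(1, R), (2, R)} : Set (ℕ × ℕ)).ncard :=
            Set.ncard_le_ncard hsub ((Set.finite_singleton _).insert _)
        _ ≤ 2 := le_trans (Set.ncard_insert_le _ _) (by simp)
    · intro x hx
      right
      rw [hp, hcol x hx]
      simp only
      omega
  · -- right child: p = (L + 1, q.2)
    set L := leftCol A k q.1 q.2 with hL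
    obtain ⟨r, hr⟩ := lc_mem A hk h2
    have hLa : q.1 ≤ L := hr.1.2.1
    have hcol : ∀ x ∈ TopkSet A k q.1 q.2 \ TopkSet A k p.1 p.2, x.2 = L := by
      rintro x ⟨hxq, hxp⟩
      have hge : L ≤ x.2 := lc_le_col A hxq
      have hle : x.2 ≤ q.2 := hxq.1.2.2
      by_contra hne
      apply hxp
      rw [hp]
      exact topk_mono A (by omega) (le_refl q.2) hxq ⟨hxq.1.1, by omega, hle⟩
    refine ⟨?_, ?_, ?_⟩
    · rw [Nat.one_le_iff_ne_zero, ← Nat.pos_iff_ne_zero, Set.ncard_pos hfin]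
      refine ⟨(r, L), hr, fun h => ?_⟩
      have := h.1.2.1
      rw [hp] at this
      simp only at this
      omega
    · have hsub : TopkSet A k q.1 q.2 \ TopkSet A k p.1 p.2 ⊆ {(1, L), (2, L)} := by
        rintro x hx
        have hc := hcol x hx
        have hrow := hx.1.1.1
        rcases hrow with h | h
        · left; rw [← h, ← hc]
        · right; rw [← h, ← hc]; exact rfl
      calc (TopkSet A k q.1 q.2 \ TopkSet A k p.1 p.2).ncard
          ≤ ({(1, L), (2, L)} : Set (ℕ × ℕ)).ncard :=
            Set.ncard_le_ncard hsub ((Set.finite_singleton _).insert _)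
        _ ≤ 2 := le_trans (Set.ncard_insert_le _ _) (by simp)
    · intro x hx
      left
      rw [hp, hcol x hx]
      simp only
      omega
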